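/- Let f : [0,1] → [0,1] be continuous and suppose f has an L-scheme: there exist a fixed point x and a point y such that either f^2(y) ≤ x < y < f(y) or f(y) < y < x ≤ f^2(y). Then the topological entropy of f is at least ln 2. -/

import Mathlib

open Set Function

private lemma pull_aux13 {g : ℝ → ℝ} {a c : ℝ} (hac : a ≤ c) (hg : ContinuousOn g (Icc a c)) :
    ∃ u v, a ≤ u ∧ u ≤ v ∧ v ≤ c ∧ g '' Icc u v = uIcc (g a) (g c) := by
  set A := g a with hA
  set B := g c with hB
  set S₁ : Set ℝ := {t | t ∈ Icc a c ∧ g t = B} with hS₁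
  have hS₁c : IsClosed S₁ := by
    have : S₁ = Icc a c ∩ g ⁻¹' {B} := by ext t; simp [hS₁, and_comm]
    rw [this]
    exact hg.preimage_isClosed_of_isClosed isClosed_Icc isClosed_singleton
  have hS₁ne : S₁.Nonempty := ⟨c, ⟨hac, le_refl c⟩, rfl⟩
  have hS₁bdd : BddBelow S₁ := ⟨a, fun t ht => ht.1.1⟩
  set v := sInf S₁ with hv
  have hvS : v ∈ S₁ := hS₁c.csInf_mem hS₁ne hS₁bdd
  have hav : a ≤ v := hvS.1.1
  have hvc : v ≤ c := hvS.1.2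
  have hgv : g v = B := hvS.2
  set S₂ : Set ℝ := {t | t ∈ Icc a v ∧ g t = A} with hS₂
  have hS₂c : IsClosed S₂ := by
    have : S₂ = Icc a v ∩ g ⁻¹' {A} := by ext t; simp [hS₂, and_comm]
    rw [this]
    exact (hg.mono (Icc_subset_Icc le_rfl hvc)).preimage_isClosed_of_isClosed isClosed_Icc
      isClosed_singleton
  have hS₂ne : S₂.Nonempty := ⟨a, ⟨le_refl a, hav⟩, rfl⟩
  have hS₂bdd : BddAbove S₂ := ⟨v, fun t ht => ht.1.2⟩
  set u := sSup S₂ with hu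
  have huS : u ∈ S₂ := hS₂c.csSup_mem hS₂ne hS₂bdd
  have hau : a ≤ u := huS.1.1
  have huv : u ≤ v := huS.1.2
  have hgu : g u = A := huS.2
  refine ⟨u, v, hau, huv, hvc, ?_⟩
  have hsub : Icc u v ⊆ Icc a c := Icc_subset_Icc hau hvc
  apply Subset.antisymm
  · rintro w ⟨t, ht, rfl⟩
    have htac : t ∈ Icc a c := hsub ht
    have hub : g t ≤ max A B := by
      by_contra h
      push_neg at h
      rcases le_total A B with hAB | hBA
      · rw [max_eq_right hAB] at h
        have hmem : B ∈ Icc (g a) (g t) := by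
          constructor
          · rw [← hA]; exact hAB
          · exact h.le
        obtain ⟨s, hs, hgs⟩ :=
          intermediate_value_Icc htac.1 (hg.mono (Icc_subset_Icc le_rfl htac.2)) hmem
        have hsS₁ : s ∈ S₁ := ⟨⟨hs.1, hs.2.trans htac.2⟩, hgs⟩
        have h1 := csInf_le hS₁bdd hsS₁
        have ht_eq : t = v := le_antisymm ht.2 (by linarith [hs.2])
        rw [ht_eq, hgv] at h
        exact lt_irrefl _ h
      · rw [max_eq_left hBA] at h
        have hmem : A ∈ Icc (g v) (g t) := by
          constructor
          · rw [hgv]; exact hBA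
          · exact h.le
        obtain ⟨s, hs, hgs⟩ :=
          intermediate_value_Icc' ht.2 (hg.mono (Icc_subset_Icc htac.1 hvc)) hmem
        have hsS₂ : s ∈ S₂ := ⟨⟨htac.1.trans hs.1, hs.2⟩, hgs⟩
        have h1 := le_csSup hS₂bdd hsS₂
        have ht_eq : t = u := le_antisymm (by linarith [hs.1]) ht.1
        rw [ht_eq, hgu] at h
        exact lt_irrefl _ h
    have hlb : min A B ≤ g t := by
      by_contra h
      push_neg at h
      rcases le_total A B with hAB | hBA
      · rw [min_eq_left hAB] at h
        have hmem : A ∈ Icc (g t) (g v) := by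
          constructor
          · exact h.le
          · rw [hgv]; exact hAB
        obtain ⟨s, hs, hgs⟩ :=
          intermediate_value_Icc ht.2 (hg.mono (Icc_subset_Icc htac.1 hvc)) hmem
        have hsS₂ : s ∈ S₂ := ⟨⟨htac.1.trans hs.1, hs.2⟩, hgs⟩
        have h1 := le_csSup hS₂bdd hsS₂
        have ht_eq : t = u := le_antisymm (by linarith [hs.1]) ht.1
        rw [ht_eq, hgu] at h
        exact lt_irrefl _ h
      · rw [min_eq_right hBA] at h
        have hmem : B ∈ Icc (g t) (g u) := by
          constructor
          · exact h.le
          · rw [hgu]; exact hBA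
        obtain ⟨s, hs, hgs⟩ :=
          intermediate_value_Icc' ht.1 (hg.mono (Icc_subset_Icc hau htac.2)) hmem
        have hsS₁ : s ∈ S₁ := ⟨⟨hau.trans hs.1, hs.2.trans htac.2⟩, hgs⟩
        have h1 := csInf_le hS₁bdd hsS₁
        have ht_eq : t = v := le_antisymm ht.2 (by linarith [hs.2])
        rw [ht_eq, hgv] at h
        exact lt_irrefl _ h
    rw [Set.uIcc]
    exact ⟨by simpa using hlb, by simpa using hub⟩
  · have h2 := intermediate_value_uIcc (hg.mono (by rw [uIcc_of_le huv]; exact hsub))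
    rw [uIcc_of_le huv, hgu, hgv] at h2
    exact h2

private lemma pull13 {g : ℝ → ℝ} {a c : ℝ} (hg : ContinuousOn g (uIcc a c)) :
    ∃ u v, u ≤ v ∧ Icc u v ⊆ uIcc a c ∧ g '' Icc u v = uIcc (g a) (g c) := by
  rcases le_total a c with hac | hca
  · rw [uIcc_of_le hac] at hg ⊢
    obtain ⟨u, v, h1, h2, h3, h4⟩ := pull_aux13 hac hg
    exact ⟨u, v, h2, Icc_subset_Icc h1 h3, h4⟩
  · rw [uIcc_of_ge hca] at hg ⊢
    obtain ⟨u, v, h1, h2, h3, h4⟩ := pull_aux13 hca hg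
    exact ⟨u, v, h2, Icc_subset_Icc h1 h3, by rw [h4, uIcc_comm]⟩

private lemma case1_13 (f : ℝ → ℝ) (hf : ContinuousOn f (Icc 0 1))
    (hmaps : MapsTo f (Icc 0 1) (Icc 0 1))
    (x y : ℝ) (hx : x ∈ Icc (0:ℝ) 1) (hy : y ∈ Icc (0:ℝ) 1) (hfix : f x = x)
    (h1 : f (f y) ≤ x) (h2 : x < y) (h3 : y < f y) :
    (Real.log 2 : EReal) ≤ Dynamics.coverEntropy f (Icc 0 1) := by
  set b := f y with hbdef
  have hb : b ∈ Icc (0:ℝ) 1 := hmaps hy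
  have hxb : x < b := h2.trans h3
  -- find r
  have hyb01 : Icc y b ⊆ Icc (0:ℝ) 1 := Icc_subset_Icc hy.1 hb.2
  obtain ⟨r, hr, hfr⟩ : ∃ r ∈ Icc y b, f r = x := by
    have := intermediate_value_Icc' h3.le (hf.mono hyb01)
    exact this ⟨h1, hxb.le⟩
  have hyr : y < r := by
    rcases eq_or_lt_of_le hr.1 with h | h
    · exfalso; rw [← h, ← hbdef] at hfr; exact absurd hfr hxb.ne'
    · exact h
  have hrb : r ≤ b := hr.2
  have hxr : x < r := h2.trans hyr
  have hsub01 : Icc x r ⊆ Icc (0:ℝ) 1 := Icc_subset_Icc hx.1 (hrb.trans hb.2)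
  -- symbol intervals
  set I : Bool → Set ℝ := fun s => if s then Icc y r else Icc x y with hIdef
  have hIsub : ∀ s, I s ⊆ Icc x r := by
    intro s; cases s <;> simp [hIdef]
    · exact Icc_subset_Icc le_rfl hyr.le
    · exact Icc_subset_Icc h2.le le_rfl
  have hIcap : Icc x y ∩ Icc y r = {y} := by
    rw [Icc_inter_Icc, max_eq_right h2.le, min_eq_left hyr.le, Icc_self]
  -- iterates are continuous
  have hfiter : ∀ m : ℕ, ContinuousOn f^[m] (Icc (0:ℝ) 1) := by
    intro m
    induction m with
    | zero => simpa using continuousOn_id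
    | succ m ih =>
      rw [Function.iterate_succ']
      exact hf.comp ih (hmaps.iterate m)
  -- pullback into a symbol interval
  have pullInto : ∀ (s : Bool) (α β : ℝ), x ≤ α → α ≤ β → β ≤ b →
      ∃ u v, u ≤ v ∧ Icc u v ⊆ I s ∧ f '' Icc u v = Icc α β := by
    intro s α β hα hαβ hβ
    set e1 : ℝ := if s then r else x with he1
    have heI : uIcc e1 y = I s := by
      cases s <;> simp [he1, hIdef, uIcc_of_le h2.le, uIcc_of_ge hyr.le]
    have hfe1 : f e1 = x := by cases s <;> simp [he1, hfix, hfr]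
    have hIs01 : I s ⊆ Icc (0:ℝ) 1 := (hIsub s).trans hsub01
    have hcont : ContinuousOn f (uIcc e1 y) := by rw [heI]; exact hf.mono hIs01
    have himg : Icc x b ⊆ f '' I s := by
      have h5 := intermediate_value_uIcc hcont
      rw [hfe1, ← hbdef, heI, uIcc_of_le hxb.le] at h5
      exact h5
    obtain ⟨u', hu', hfu'⟩ := himg ⟨hα, hαβ.trans hβ⟩
    obtain ⟨v', hv', hfv'⟩ := himg ⟨hα.trans hαβ, hβ⟩
    have huv'sub : uIcc u' v' ⊆ I s := by
      cases s <;> simp only [hIdef, if_true, if_false] at hu' hv' ⊢ <;>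
        exact uIcc_subset_Icc hu' hv'
    obtain ⟨u, v, huv, hsubp, himgp⟩ := pull13 (hf.mono (huv'sub.trans hIs01))
    exact ⟨u, v, huv, hsubp.trans huv'sub, by rw [himgp, hfu', hfv', uIcc_of_le hαβ]⟩
  -- itinerary intervals
  have Kex : ∀ (m : ℕ) (w : ℕ → Bool), ∃ u v, u ≤ v ∧ Icc u v ⊆ Icc x r ∧
      (∀ j, j < m → f^[j] '' Icc u v ⊆ I (w j)) ∧ f^[m] '' Icc u v = Icc x r := by
    intro m
    induction m with
    | zero =>
      intro w
      exact ⟨x, r, hxr.le, subset_rfl, by omega, by simp⟩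
    | succ m ih =>
      intro w
      obtain ⟨u, v, huv, hsubxr, hitin, hfull⟩ := ih (fun j => w (j + 1))
      have hu' : u ∈ Icc x r := hsubxr (left_mem_Icc.2 huv)
      have hv' : v ∈ Icc x r := hsubxr (right_mem_Icc.2 huv)
      obtain ⟨u2, v2, huv2, hsubI, himg2⟩ :=
        pullInto (w 0) u v hu'.1 huv (hv'.2.trans hrb)
      refine ⟨u2, v2, huv2, hsubI.trans (hIsub _), ?_, ?_⟩
      · intro j hj
        cases j with
        | zero => simpa using hsubI
        | succ j =>
          rw [Function.iterate_succ, Set.image_comp, himg2]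
          exact hitin j (by omega)
      · rw [Function.iterate_succ, Set.image_comp, himg2, hfull]
  -- reduction to a per-n bound
  suffices hsuf : ∀ n : ℕ, (((n+1 : ℝ)/(n+3) * Real.log 2 : ℝ) : EReal) ≤
      Dynamics.coverEntropy f (Icc 0 1) by
    have htend : Filter.Tendsto (fun n : ℕ => (((n+1 : ℝ)/(n+3) * Real.log 2 : ℝ) : EReal))
        Filter.atTop (nhds ((Real.log 2 : ℝ) : EReal)) := by
      rw [EReal.tendsto_coe]
      have h0 : Filter.Tendsto (fun n : ℕ => ((n+1 : ℝ)/(n+3))) Filter.atTop (nhds 1) := by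
        have heq : (fun n : ℕ => ((n+1 : ℝ)/(n+3))) = fun n : ℕ => 1 - 2/((n:ℝ)+3) := by
          funext n
          have hne : (n:ℝ)+3 ≠ 0 := by positivity
          field_simp
          ring
        rw [heq]
        have h2' : Filter.Tendsto (fun n : ℕ => 2/((n:ℝ)+3)) Filter.atTop (nhds 0) :=
          Filter.Tendsto.div_atTop tendsto_const_nhds
            (Filter.tendsto_atTop_add_const_right _ 3 tendsto_natCast_atTop_atTop)
        simpa using tendsto_const_nhds.sub h2'
      simpa using h0.mul_const (Real.log 2)
    exact le_of_tendsto htend (Filter.Eventually.of_forall hsuf)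
  intro n
  -- words and itinerary intervals for words of length n+3 ending in true, true
  choose uK vK hK1 hK2 hK3 hK4 using Kex (n + 3)
  set W : (Fin (n+1) → Bool) → (ℕ → Bool) := fun c j => if h : j < n+1 then c ⟨j, h⟩ else true
    with hWdef
  set K : (Fin (n+1) → Bool) → Set ℝ := fun c => Icc (uK (W c)) (vK (W c)) with hKdef
  -- disjointness of the itinerary intervals
  have hdisj : ∀ (c c' : Fin (n+1) → Bool), c ≠ c' → ∀ q, q ∈ K c → q ∈ K c' → False := by
    intro c c' hne q hq hq'
    obtain ⟨k, hk⟩ := Function.ne_iff.1 hne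
    have hmem : ∀ (d : Fin (n+1) → Bool) (p : ℝ), p ∈ K d →
        ∀ j, j < n + 3 → f^[j] p ∈ I (W d j) := by
      intro d p hp j hj
      exact hK3 (W d) j hj (mem_image_of_mem _ hp)
    have hkn : (k : ℕ) < n + 1 := k.isLt
    have hWk : W c k = c k := by simp [hWdef, hkn]; exact fun h => absurd hkn (by omega)
    have hWk' : W c' k = c' k := by simp [hWdef, hkn]; exact fun h => absurd hkn (by omega)
    have hq1 := hmem c q hq k (by omega)
    have hq2 := hmem c' q hq' k (by omega)
    rw [hWk] at hq1
    rw [hWk'] at hq2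
    have hyk : f^[(k : ℕ)] q = y := by
      have hin : f^[(k : ℕ)] q ∈ Icc x y ∩ Icc y r := by
        rcases Bool.dichotomy (c k) with h | h
        · have h' : c' k = true := by
            rcases Bool.dichotomy (c' k) with h' | h'
            · exact absurd (h.trans h'.symm) hk
            · exact h'
          rw [h] at hq1; rw [h'] at hq2
          simp only [hIdef, if_true, if_false] at hq1 hq2
          exact ⟨hq1, hq2⟩
        · have h' : c' k = false := by
            rcases Bool.dichotomy (c' k) with h' | h'
            · exact h'
            · exact absurd (h.trans h'.symm) hk
          rw [h] at hq1; rw [h'] at hq2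
          simp only [hIdef, if_true, if_false] at hq1 hq2
          exact ⟨hq2, hq1⟩
      rw [hIcap] at hin
      exact hin
    have hbk : f^[(k : ℕ) + 1] q = b := by
      rw [Function.iterate_succ_apply', hyk, hbdef]
    have hbI : b ∈ I (W c ((k : ℕ) + 1)) := by
      have := hmem c q hq ((k : ℕ) + 1) (by omega)
      rwa [hbk] at this
    have hbr : b ≤ r := ((hIsub _) hbI).2
    have hrb' : r = b := le_antisymm hrb hbr
    have hxk : f^[(k : ℕ) + 2] q = x := by
      rw [show (k:ℕ) + 2 = ((k:ℕ) + 1) + 1 by ring, Function.iterate_succ_apply', hbk, ← hrb',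
        hfr]
    have hxall : ∀ j, (k : ℕ) + 2 ≤ j → j < n + 3 → f^[j] q = x := by
      intro j hj1 hj2
      induction j, hj1 using Nat.le_induction with
      | base => exact hxk
      | succ j hj ih =>
        rw [Function.iterate_succ_apply', ih (by omega), hfix]
    have hfin : f^[n + 2] q = x := hxall (n + 2) (by omega) (by omega)
    have hfinI : x ∈ I (W c (n + 2)) := by
      have := hmem c q hq (n + 2) (by omega)
      rwa [hfin] at this
    have hWtop : W c (n + 2) = true := by simp [hWdef]
    rw [hWtop] at hfinI
    simp only [hIdef, if_true] at hfinI
    linarith [hfinI.1]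
  -- the uniform gap δ between the intervals
  classical
  set P : Finset ((Fin (n+1) → Bool) × (Fin (n+1) → Bool)) :=
    Finset.univ.filter (fun p => p.1 ≠ p.2) with hP
  set d : ((Fin (n+1) → Bool) × (Fin (n+1) → Bool)) → ℝ :=
    fun p => max (uK (W p.2) - vK (W p.1)) (uK (W p.1) - vK (W p.2)) with hd
  have hdpos : ∀ p ∈ P, 0 < d p ∧ ∀ s t, s ∈ K p.1 → t ∈ K p.2 → d p ≤ |s - t| := by
    intro p hp
    have hne : p.1 ≠ p.2 := (Finset.mem_filter.1 hp).2
    have hcase : vK (W p.1) < uK (W p.2) ∨ vK (W p.2) < uK (W p.1) := by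
      by_contra hcon
      push_neg at hcon
      obtain ⟨hA, hB⟩ := hcon
      refine hdisj p.1 p.2 hne (max (uK (W p.1)) (uK (W p.2))) ?_ ?_
      · exact ⟨le_max_left _ _, max_le (hK1 _) hA⟩
      · exact ⟨le_max_right _ _, max_le hB (hK1 _)⟩
    rcases hcase with h | h
    · constructor
      · have h0 : 0 < uK (W p.2) - vK (W p.1) := by linarith
        exact h0.trans_le (le_max_left _ _)
      · intro s t hs ht
        have hs2 : s ≤ vK (W p.1) := hs.2
        have ht1 : uK (W p.2) ≤ t := ht.1
        have hs1 : uK (W p.1) ≤ s := hs.1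
        have ht2 : t ≤ vK (W p.2) := ht.2
        have : d p ≤ t - s := max_le (by linarith) (by linarith)
        calc d p ≤ t - s := this
          _ ≤ |s - t| := by rw [abs_sub_comm]; exact le_abs_self _
    · constructor
      · have h0 : 0 < uK (W p.1) - vK (W p.2) := by linarith
        exact h0.trans_le (le_max_right _ _)
      · intro s t hs ht
        have hs2 : s ≤ vK (W p.1) := hs.2
        have ht1 : uK (W p.2) ≤ t := ht.1
        have hs1 : uK (W p.1) ≤ s := hs.1
        have ht2 : t ≤ vK (W p.2) := ht.2
        have : d p ≤ s - t := max_le (by linarith) (by linarith)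
        exact this.trans (le_abs_self _)
  have hPne : P.Nonempty := by
    refine ⟨((fun _ => false), (fun _ => true)), Finset.mem_filter.2 ⟨Finset.mem_univ _, ?_⟩⟩
    intro h
    exact Bool.noConfusion (congrFun h ⟨0, by omega⟩)
  obtain ⟨p₀, hp₀P, hp₀min⟩ := Finset.exists_min_image P d hPne
  set δ : ℝ := d p₀ with hδ
  have hδpos : 0 < δ := (hdpos p₀ hp₀P).1
  have hgap : ∀ c c', c ≠ c' → ∀ s t, s ∈ K c → t ∈ K c' → δ ≤ |s - t| := by
    intro c c' hne s t hs ht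
    have hmemP : (c, c') ∈ P := Finset.mem_filter.2 ⟨Finset.mem_univ _, hne⟩
    exact le_trans (hp₀min _ hmemP) ((hdpos _ hmemP).2 s t hs ht)
  set U : Set (ℝ × ℝ) := {pq | dist pq.1 pq.2 < δ/2} with hU
  have hUuni : U ∈ uniformity ℝ := Metric.dist_mem_uniformity (by linarith)
  -- block itineraries
  have Cex : ∀ (M : ℕ) (c : ℕ → (Fin (n+1) → Bool)), ∃ u v, u ≤ v ∧ Icc u v ⊆ Icc x r ∧
      ∀ j, j < M → f^[j * (n+3)] '' Icc u v ⊆ K (c j) := by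
    intro M
    induction M with
    | zero => intro c; exact ⟨x, r, hxr.le, subset_rfl, by omega⟩
    | succ M ih =>
      intro c
      obtain ⟨u, v, huv, hsubxr, hit⟩ := ih (fun j => c (j+1))
      have hKsub : K (c 0) ⊆ Icc x r := hK2 (W (c 0))
      have hK01 : K (c 0) ⊆ Icc (0:ℝ) 1 := hKsub.trans hsub01
      have hfull := hK4 (W (c 0))
      have hu' : u ∈ Icc x r := hsubxr (left_mem_Icc.2 huv)
      have hv' : v ∈ Icc x r := hsubxr (right_mem_Icc.2 huv)
      rw [← hfull] at hu' hv'
      obtain ⟨u', hu'K, hfu'⟩ := hu'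
      obtain ⟨v', hv'K, hfv'⟩ := hv'
      have huv'sub : uIcc u' v' ⊆ K (c 0) := uIcc_subset_Icc hu'K hv'K
      obtain ⟨u2, v2, huv2, hsub2, himg2⟩ := pull13 ((hfiter (n+3)).mono (huv'sub.trans hK01))
      rw [hfu', hfv', uIcc_of_le huv] at himg2
      refine ⟨u2, v2, huv2, (hsub2.trans huv'sub).trans hKsub, ?_⟩
      intro j hj
      cases j with
      | zero => simpa using (hsub2.trans huv'sub)
      | succ j =>
        rw [show (j+1)*(n+3) = j*(n+3) + (n+3) by ring, Function.iterate_add, Set.image_comp,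
          himg2]
        exact hit j (by omega)
  -- reduce to the net entropy of U
  suffices hne2 : (((n+1:ℝ)/(n+3) * Real.log 2 : ℝ) : EReal) ≤
      Dynamics.netEntropyEntourage f (Icc 0 1) U by
    rw [Dynamics.coverEntropy_eq_iSup_netEntropyEntourage]
    exact le_trans hne2
      (le_iSup₂ (f := fun V (_ : V ∈ uniformity ℝ) => Dynamics.netEntropyEntourage f (Icc 0 1) V)
        U hUuni)
  have hEnt : Dynamics.netEntropyEntourage f (Icc 0 1) U
      = Filter.atTop.limsup
          (fun N : ℕ => ENNReal.log (Dynamics.netMaxcard f (Icc 0 1) U N) / N) := rfl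
  rw [hEnt]
  apply Filter.le_limsup_of_frequently_le ?_ (by isBoundedDefault)
  rw [Filter.frequently_atTop]
  intro N₀
  refine ⟨(N₀+1) * (n+3), by nlinarith, ?_⟩
  set M : ℕ := N₀ + 1 with hM
  -- construct the (M*(n+3), U)-separated set
  have hCex := fun σ : Fin M → (Fin (n+1) → Bool) =>
    Cex M (fun j => if h : j < M then σ ⟨j, h⟩ else (fun _ => false))
  choose zu zv hz1 hz2 hz3 using hCex
  set z : (Fin M → (Fin (n+1) → Bool)) → ℝ := fun σ => zu σ with hzdef
  have hzmem : ∀ σ, z σ ∈ Icc x r := fun σ => hz2 σ (left_mem_Icc.2 (hz1 σ))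
  have hzK : ∀ σ (j : Fin M), f^[(j:ℕ) * (n+3)] (z σ) ∈ K (σ j) := by
    intro σ j
    have := hz3 σ j j.isLt (mem_image_of_mem _ (left_mem_Icc.2 (hz1 σ)))
    simpa [j.isLt] using this
  have hBdisj : ∀ σ σ', σ ≠ σ' →
      Disjoint (UniformSpace.ball (z σ) (Dynamics.dynEntourage f U (M*(n+3))))
        (UniformSpace.ball (z σ') (Dynamics.dynEntourage f U (M*(n+3)))) := by
    intro σ σ' hne'
    rw [Set.disjoint_left]
    intro q hq hq'
    obtain ⟨k, hk⟩ := Function.ne_iff.1 hne'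
    have hlt : (k:ℕ) * (n+3) < M * (n+3) :=
      mul_lt_mul_of_pos_right k.isLt (by omega)
    have h5 : (z σ, q) ∈ Dynamics.dynEntourage f U (M*(n+3)) := hq
    have h6 : (z σ', q) ∈ Dynamics.dynEntourage f U (M*(n+3)) := hq'
    rw [Dynamics.mem_dynEntourage] at h5 h6
    have h5' := h5 _ hlt
    have h6' := h6 _ hlt
    simp only [hU, mem_setOf_eq] at h5' h6'
    have htri := dist_triangle (f^[(k:ℕ)*(n+3)] (z σ)) (f^[(k:ℕ)*(n+3)] q)
      (f^[(k:ℕ)*(n+3)] (z σ'))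
    rw [dist_comm (f^[(k:ℕ)*(n+3)] q)] at htri
    have hdist : dist (f^[(k:ℕ)*(n+3)] (z σ)) (f^[(k:ℕ)*(n+3)] (z σ')) < δ := by linarith
    have hgap' := hgap (σ k) (σ' k) hk _ _ (hzK σ k) (hzK σ' k)
    rw [Real.dist_eq] at hdist
    linarith
  have hzinj : Function.Injective z := by
    intro σ σ' h
    by_contra hne'
    have hd' := hBdisj σ σ' hne'
    rw [h] at hd'
    have hself : z σ' ∈ UniformSpace.ball (z σ') (Dynamics.dynEntourage f U (M*(n+3))) := by
      show (z σ', z σ') ∈ Dynamics.dynEntourage f U (M*(n+3))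
      rw [Dynamics.mem_dynEntourage]
      intro k hk
      simp only [hU, mem_setOf_eq, dist_self]
      linarith
    exact Set.disjoint_left.1 hd' hself hself
  set s : Finset ℝ := Finset.image z Finset.univ with hs
  have hcard : s.card = 2 ^ ((n+1) * M) := by
    rw [hs, Finset.card_image_of_injective _ hzinj, Finset.card_univ, Fintype.card_fun,
      Fintype.card_fun]
    simp only [Fintype.card_bool, Fintype.card_fin]
    rw [← pow_mul]
  have hnet : Dynamics.IsDynNetIn f (Icc 0 1) U (M*(n+3)) ↑s := by
    constructor
    · intro a ha
      simp only [hs, Finset.coe_image, Set.mem_image, Finset.coe_univ, Set.mem_univ,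
        true_and] at ha
      obtain ⟨σ, rfl⟩ := ha
      exact hsub01 (hzmem σ)
    · intro a ha b' hb' hab
      simp only [hs, Finset.coe_image, Set.mem_image, Finset.coe_univ, Set.mem_univ,
        true_and] at ha hb'
      obtain ⟨σ, rfl⟩ := ha
      obtain ⟨σ', rfl⟩ := hb'
      have hσ : σ ≠ σ' := fun h => hab (by rw [h])
      exact hBdisj σ σ' hσ
  have hmax := hnet.card_le_netMaxcard
  rw [hcard] at hmax
  -- numeric computation
  have hlog2 : ENNReal.log 2 = (Real.log 2 : EReal) := by
    rw [show (2:ENNReal) = ENNReal.ofReal 2 by simp, ENNReal.log_ofReal_of_pos (by norm_num)]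
  have hlog : ((((n+1) * M : ℕ) * Real.log 2 : ℝ) : EReal)
      ≤ ENNReal.log (Dynamics.netMaxcard f (Icc 0 1) U ((N₀+1)*(n+3))) := by
    have : ((2:ENNReal) ^ ((n+1)*M)) ≤
        ((Dynamics.netMaxcard f (Icc 0 1) U (M*(n+3)) : ℕ∞) : ENNReal) := by
      exact_mod_cast hmax
    have hmono := ENNReal.log_monotone this
    rw [ENNReal.log_pow, hlog2] at hmono
    have hMe : M * (n+3) = (N₀+1)*(n+3) := by rw [hM]
    rw [hMe] at hmono
    refine le_trans (le_of_eq ?_) hmono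
    push_cast
    ring_nf
  calc (((n+1:ℝ)/(n+3) * Real.log 2 : ℝ) : EReal)
      = ((((n+1) * M : ℕ) * Real.log 2 / ((N₀+1)*(n+3) : ℕ) : ℝ) : EReal) := by
        norm_cast
        rw [hM]
        field_simp
        push_cast
        ring
    _ = ((((n+1) * M : ℕ) * Real.log 2 : ℝ) : EReal) / (((N₀+1)*(n+3) : ℕ) : EReal) := by
        rw [EReal.coe_div]
        norm_cast
    _ ≤ ENNReal.log (Dynamics.netMaxcard f (Icc 0 1) U ((N₀+1)*(n+3))) /
          (((N₀+1)*(n+3) : ℕ) : EReal) :=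
        EReal.monotone_div_right_of_nonneg (by exact_mod_cast Nat.cast_nonneg' _) hlog

theorem stmt_13 (f : ℝ → ℝ) (hf : ContinuousOn f (Icc 0 1))
    (hmaps : MapsTo f (Icc 0 1) (Icc 0 1))
    (x y : ℝ) (hx : x ∈ Icc (0:ℝ) 1) (hy : y ∈ Icc (0:ℝ) 1) (hfix : f x = x)
    (hL : (f (f y) ≤ x ∧ x < y ∧ y < f y) ∨ (f y < y ∧ y < x ∧ x ≤ f (f y))) :
    (Real.log 2 : EReal) ≤ Dynamics.coverEntropy f (Icc 0 1) := by
  rcases hL with ⟨h1, h2, h3⟩ | ⟨h1, h2, h3⟩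
  · exact case1_13 f hf hmaps x y hx hy hfix h1 h2 h3
  · set φ : ℝ → ℝ := fun t => 1 - t with hφ
    set g : ℝ → ℝ := fun t => 1 - f (1 - t) with hg
    have hφcont : Continuous φ := continuous_const.sub continuous_id
    have hφI : φ '' Icc 0 1 = Icc (0:ℝ) 1 := by
      rw [hφ, image_const_sub_Icc]
      norm_num
    have hφmaps : MapsTo φ (Icc 0 1) (Icc (0:ℝ) 1) := by
      intro t ht
      exact ⟨by simp [hφ]; linarith [ht.2], by simp [hφ]; linarith [ht.1]⟩
    have hgc : ContinuousOn g (Icc 0 1) := by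
      have h0 : ContinuousOn (f ∘ φ) (Icc 0 1) := hf.comp hφcont.continuousOn hφmaps
      exact continuous_const.continuousOn.sub (by exact h0)
    have hgmaps : MapsTo g (Icc 0 1) (Icc 0 1) := by
      intro t ht
      have h1' : (1:ℝ) - t ∈ Icc (0:ℝ) 1 := hφmaps ht
      have h2' := hmaps h1'
      exact ⟨by simp [hg]; linarith [h2'.2], by simp [hg]; linarith [h2'.1]⟩
    have hx' : (1:ℝ) - x ∈ Icc (0:ℝ) 1 := hφmaps hx
    have hy' : (1:ℝ) - y ∈ Icc (0:ℝ) 1 := hφmaps hy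
    have hgfix : g (1 - x) = 1 - x := by
      show 1 - f (1 - (1 - x)) = 1 - x
      rw [show (1:ℝ) - (1 - x) = x by ring, hfix]
    have hgy : g (1 - y) = 1 - f y := by
      show 1 - f (1 - (1 - y)) = 1 - f y
      rw [show (1:ℝ) - (1 - y) = y by ring]
    have hggy : g (g (1 - y)) = 1 - f (f y) := by
      rw [hgy]
      show 1 - f (1 - (1 - f y)) = 1 - f (f y)
      rw [show (1:ℝ) - (1 - f y) = f y by ring]
    have hcase := case1_13 g hgc hgmaps (1-x) (1-y) hx' hy' hgfix
      (by rw [hggy]; linarith) (by linarith) (by rw [hgy]; linarith)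
    have hsemi : Function.Semiconj φ f g := by
      intro t
      show 1 - f t = 1 - f (1 - (1 - t))
      rw [show (1:ℝ) - (1 - t) = t by ring]
    have hφuc : UniformContinuous φ := uniformContinuous_const.sub uniformContinuous_id
    have htrans := Dynamics.coverEntropy_image_le_of_uniformContinuous hsemi hφuc (Icc 0 1)
    rw [hφI] at htrans
    exact le_trans hcase htrans
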